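/- arXiv:2509.08293 — 2 statements merged into one kernel-verified Lean document; each statement's English description precedes it below -/
import Mathlib

section
/- Let 1 ≤ p, q, r ≤ ∞ with 1/p = 1/q + 1/r. For every u in the algebraic tensor product E₁ ⊗ ⋯ ⊗ E_m ⊗ F of Banach lattices, ε(u) ≤ μ⁺_{(q,r)}(u) ≤ π(u), where ε and π are the injective and projective tensor norms. -/
open scoped BigOperators TensorProduct
open PiTensorProduct

set_option linter.unusedSectionVars false
set_option maxHeartbeats 1000000


section Modulus
variable {G : Type*} [NormedAddCommGroup G] [Lattice G] [IsOrderedAddMonoid G] [HasSolidNorm G]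
  [NormedSpace ℝ G]

private lemma riesz_decomp {x y z : G} (hz : 0 ≤ z) (hx : 0 ≤ x) (hy : 0 ≤ y)
    (hzxy : z ≤ x + y) :
    ∃ a b : G, z = a + b ∧ 0 ≤ a ∧ a ≤ x ∧ 0 ≤ b ∧ b ≤ y := by
  refine ⟨z ⊓ x, z - z ⊓ x, by abel, le_inf hz hx, inf_le_right, ?_, ?_⟩
  · have : z - z ⊓ x = (z - z) ⊔ (z - x) := by rw [sub_inf]
    rw [this, sub_self]
    exact le_sup_left
  · have : z - z ⊓ x = (z - z) ⊔ (z - x) := by rw [sub_inf]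
    rw [this, sub_self]
    exact sup_le hy (sub_le_iff_le_add'.mpr hzxy)

private noncomputable def nuF (f : G →L[ℝ] ℝ) (x : G) : ℝ :=
  sSup (f '' {z | -x ≤ z ∧ z ≤ x})

private lemma norm_le_of_between {x z : G} (hx : 0 ≤ x) (h1 : -x ≤ z) (h2 : z ≤ x) :
    ‖z‖ ≤ ‖x‖ := by
  refine norm_le_norm_of_abs_le_abs ?_
  rw [abs_of_nonneg hx]
  exact abs_le'.2 ⟨h2, neg_le.mp h1⟩

private lemma nuF_bddAbove (f : G →L[ℝ] ℝ) {x : G} (hx : 0 ≤ x) :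
    BddAbove (f '' {z | -x ≤ z ∧ z ≤ x}) := by
  refine ⟨‖f‖ * ‖x‖, ?_⟩
  rintro w ⟨z, ⟨h1, h2⟩, rfl⟩
  calc f z ≤ |f z| := le_abs_self _
    _ ≤ ‖f‖ * ‖z‖ := f.le_opNorm z
    _ ≤ ‖f‖ * ‖x‖ := by
        exact mul_le_mul_of_nonneg_left (norm_le_of_between hx h1 h2) (norm_nonneg f)

private lemma le_nuF (f : G →L[ℝ] ℝ) {x z : G} (hx : 0 ≤ x) (h1 : -x ≤ z) (h2 : z ≤ x) :
    f z ≤ nuF f x :=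
  le_csSup (nuF_bddAbove f hx) ⟨z, ⟨h1, h2⟩, rfl⟩

private lemma nuF_nonneg (f : G →L[ℝ] ℝ) {x : G} (hx : 0 ≤ x) : 0 ≤ nuF f x := by
  have := le_nuF f (z := 0) hx (neg_nonpos.mpr hx) hx
  simpa using this

private lemma nuF_le (f : G →L[ℝ] ℝ) {x : G} (hx : 0 ≤ x) : nuF f x ≤ ‖f‖ * ‖x‖ := by
  refine csSup_le ⟨f 0, 0, ⟨neg_nonpos.mpr hx, hx⟩, rfl⟩ ?_
  rintro w ⟨z, ⟨h1, h2⟩, rfl⟩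
  calc f z ≤ |f z| := le_abs_self _
    _ ≤ ‖f‖ * ‖z‖ := f.le_opNorm z
    _ ≤ ‖f‖ * ‖x‖ := mul_le_mul_of_nonneg_left (norm_le_of_between hx h1 h2) (norm_nonneg f)

private lemma nuF_mono (f : G →L[ℝ] ℝ) {x y : G} (hx : 0 ≤ x) (hxy : x ≤ y) :
    nuF f x ≤ nuF f y := by
  refine csSup_le ⟨f 0, 0, ⟨neg_nonpos.mpr hx, hx⟩, rfl⟩ ?_
  rintro w ⟨z, ⟨h1, h2⟩, rfl⟩
  exact le_nuF f (hx.trans hxy) (le_trans (neg_le_neg hxy) h1) (h2.trans hxy)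

private lemma nuF_zero (f : G →L[ℝ] ℝ) : nuF f 0 = 0 := by
  refine le_antisymm ?_ (nuF_nonneg f le_rfl)
  refine csSup_le ⟨f 0, 0, ⟨by simp, le_rfl⟩, rfl⟩ ?_
  rintro w ⟨z, ⟨h1, h2⟩, rfl⟩
  have : z = 0 := le_antisymm h2 (by simpa using h1)
  simp [this]

private lemma nuF_add (f : G →L[ℝ] ℝ) {x y : G} (hx : 0 ≤ x) (hy : 0 ≤ y) :
    nuF f (x + y) = nuF f x + nuF f y := by
  have hxy : (0 : G) ≤ x + y := add_nonneg hx hy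
  refine le_antisymm ?_ ?_
  · refine csSup_le ⟨f 0, 0, ⟨neg_nonpos.mpr hxy, hxy⟩, rfl⟩ ?_
    rintro w ⟨z, ⟨h1, h2⟩, rfl⟩
    have hzp : z⁺ ≤ x + y := by
      rw [posPart_def]; exact sup_le h2 hxy
    have hzn : z⁻ ≤ x + y := by
      rw [negPart_def]; exact sup_le (neg_le.mp h1) hxy
    obtain ⟨a1, a2, hza, ha1, ha1x, ha2, ha2y⟩ := riesz_decomp (posPart_nonneg z) hx hy hzp
    obtain ⟨b1, b2, hzb, hb1, hb1x, hb2, hb2y⟩ := riesz_decomp (negPart_nonneg z) hx hy hzn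
    have hz : z = (a1 - b1) + (a2 - b2) := by
      have := posPart_sub_negPart z
      rw [← this, hza, hzb]; abel
    have e1 : f (a1 - b1) ≤ nuF f x := by
      refine le_nuF f hx ?_ ?_
      · calc -x ≤ -b1 := neg_le_neg hb1x
          _ ≤ a1 - b1 := by simpa using sub_le_sub_right ha1 b1
      · calc a1 - b1 ≤ a1 - 0 := sub_le_sub_left hb1 a1
          _ = a1 := by simp
          _ ≤ x := ha1x
    have e2 : f (a2 - b2) ≤ nuF f y := by
      refine le_nuF f hy ?_ ?_
      · calc -y ≤ -b2 := neg_le_neg hb2y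
          _ ≤ a2 - b2 := by simpa using sub_le_sub_right ha2 b2
      · calc a2 - b2 ≤ a2 - 0 := sub_le_sub_left hb2 a2
          _ = a2 := by simp
          _ ≤ y := ha2y
    calc f z = f (a1 - b1) + f (a2 - b2) := by rw [hz, map_add]
      _ ≤ nuF f x + nuF f y := add_le_add e1 e2
  · have h1 : nuF f x ≤ nuF f (x + y) - nuF f y := by
      refine csSup_le ⟨f 0, 0, ⟨neg_nonpos.mpr hx, hx⟩, rfl⟩ ?_
      rintro w ⟨z1, ⟨hz11, hz12⟩, rfl⟩
      rw [le_sub_iff_add_le, add_comm]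
      have h2 : nuF f y ≤ nuF f (x + y) - f z1 := by
        refine csSup_le ⟨f 0, 0, ⟨neg_nonpos.mpr hy, hy⟩, rfl⟩ ?_
        rintro w2 ⟨z2, ⟨hz21, hz22⟩, rfl⟩
        rw [le_sub_iff_add_le, add_comm]
        have := le_nuF f hxy (x := x + y) (z := z1 + z2)
          (by rw [neg_add]; exact add_le_add hz11 hz21) (add_le_add hz12 hz22)
        simpa using this
      linarith
    linarith

private noncomputable def modAddHom (f : G →L[ℝ] ℝ) : G →+ ℝ where
  toFun x := nuF f x⁺ - nuF f x⁻
  map_zero' := by simp [nuF_zero]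
  map_add' x y := by
    have key : (x + y)⁺ + (x⁻ + y⁻) = (x⁺ + y⁺) + (x + y)⁻ := by
      have h1 := posPart_sub_negPart (x + y)
      have h2 := posPart_sub_negPart x
      have h3 := posPart_sub_negPart y
      have : (x + y)⁺ - (x + y)⁻ = (x⁺ + y⁺) - (x⁻ + y⁻) := by
        rw [h1, ← sub_add_sub_comm, h2, h3]
      rw [sub_eq_sub_iff_add_eq_add] at this
      linear_combination (norm := abel) this
    have knu := congrArg (nuF f) key
    rw [nuF_add f (posPart_nonneg _) (add_nonneg (negPart_nonneg _) (negPart_nonneg _)),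
        nuF_add f (add_nonneg (posPart_nonneg _) (posPart_nonneg _)) (negPart_nonneg _),
        nuF_add f (negPart_nonneg _) (negPart_nonneg _),
        nuF_add f (posPart_nonneg _) (posPart_nonneg _)] at knu
    show nuF f (x + y)⁺ - nuF f (x + y)⁻ = (nuF f x⁺ - nuF f x⁻) + (nuF f y⁺ - nuF f y⁻)
    linarith

private lemma modAddHom_bound (f : G →L[ℝ] ℝ) (x : G) :
    ‖modAddHom f x‖ ≤ ‖f‖ * ‖x‖ := by
  have habs : |x| = x⁺ + x⁻ := (posPart_add_negPart x).symm
  have hpabs : x⁺ ≤ |x| := by rw [habs]; exact le_add_of_nonneg_right (negPart_nonneg _)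
  have hnabs : x⁻ ≤ |x| := by rw [habs]; exact le_add_of_nonneg_left (posPart_nonneg _)
  have h1 : nuF f x⁺ ≤ nuF f |x| := nuF_mono f (posPart_nonneg _) hpabs
  have h2 : nuF f x⁻ ≤ nuF f |x| := nuF_mono f (negPart_nonneg _) hnabs
  have h3 : nuF f |x| ≤ ‖f‖ * ‖x‖ := by
    have := nuF_le f (abs_nonneg x)
    rwa [norm_abs_eq_norm] at this
  have h4 : 0 ≤ nuF f x⁺ := nuF_nonneg f (posPart_nonneg _)
  have h5 : 0 ≤ nuF f x⁻ := nuF_nonneg f (negPart_nonneg _)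
  rw [Real.norm_eq_abs, abs_le]
  constructor
  · show -(‖f‖ * ‖x‖) ≤ nuF f x⁺ - nuF f x⁻
    linarith
  · show nuF f x⁺ - nuF f x⁻ ≤ ‖f‖ * ‖x‖
    linarith

/-- The modulus of a continuous linear functional on a normed lattice. -/
private noncomputable def modCLM (f : G →L[ℝ] ℝ) : G →L[ℝ] ℝ :=
  (modAddHom f).toRealLinearMap
    ((AddMonoidHomClass.lipschitz_of_bound (modAddHom f) ‖f‖ (modAddHom_bound f)).continuous)

private lemma modCLM_apply (f : G →L[ℝ] ℝ) (x : G) :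
    modCLM f x = nuF f x⁺ - nuF f x⁻ := rfl

private lemma modCLM_norm_le (f : G →L[ℝ] ℝ) : ‖modCLM f‖ ≤ ‖f‖ :=
  ContinuousLinearMap.opNorm_le_bound _ (norm_nonneg f) fun x => by
    exact modAddHom_bound f x

private lemma modCLM_pos (f : G →L[ℝ] ℝ) {x : G} (hx : 0 ≤ x) : 0 ≤ modCLM f x := by
  rw [modCLM_apply, posPart_eq_self.mpr hx, negPart_eq_zero.mpr hx, nuF_zero, sub_zero]
  exact nuF_nonneg f hx

private lemma abs_apply_le_modCLM_abs (f : G →L[ℝ] ℝ) (z : G) :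
    |f z| ≤ modCLM f |z| := by
  have habs : modCLM f |z| = nuF f |z| := by
    rw [modCLM_apply, posPart_eq_self.mpr (abs_nonneg z),
      negPart_eq_zero.mpr (abs_nonneg z), nuF_zero, sub_zero]
  rw [habs, abs_le]
  constructor
  · have h := le_nuF f (z := -z) (abs_nonneg z) (neg_le_neg (le_abs_self z)) (neg_le_abs z)
    rw [map_neg] at h
    linarith
  · exact le_nuF f (abs_nonneg z) (neg_le.mp (neg_le_abs z)) (le_abs_self z)

end Modulus


section RpowAux

private lemma sum_rpow_le_one {n : ℕ} {p : ℝ} (hp : 0 < p) {t : Fin n → ℝ}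
    (ht : (∑ i, |t i| ^ p) ^ (1 / p) ≤ 1) : ∑ i, |t i| ^ p ≤ 1 := by
  have hB : (0:ℝ) ≤ ∑ i, |t i| ^ p :=
    Finset.sum_nonneg fun i _ => Real.rpow_nonneg (abs_nonneg _) _
  have h1 : ((∑ i, |t i| ^ p) ^ (1 / p)) ^ p ≤ 1 :=
    Real.rpow_le_one (Real.rpow_nonneg hB _) ht hp.le
  rwa [← Real.rpow_mul hB, one_div_mul_cancel hp.ne', Real.rpow_one] at h1

private lemma abs_le_one_of_constraint {n : ℕ} {p : ℝ} (hp : 0 < p) {t : Fin n → ℝ}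
    (ht : (∑ i, |t i| ^ p) ^ (1 / p) ≤ 1) (i : Fin n) : |t i| ≤ 1 := by
  have h1 : |t i| ^ p ≤ 1 :=
    le_trans (Finset.single_le_sum (fun j _ => Real.rpow_nonneg (abs_nonneg _) _)
      (Finset.mem_univ i)) (sum_rpow_le_one hp ht)
  have h2 : (|t i| ^ p) ^ (1/p) ≤ 1 := Real.rpow_le_one (Real.rpow_nonneg (abs_nonneg _) _) h1
    (by positivity)
  rwa [← Real.rpow_mul (abs_nonneg _), mul_one_div_cancel hp.ne', Real.rpow_one] at h2

end RpowAux


section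

variable {m : ℕ} {E : Fin m → Type*}
  [∀ i, NormedAddCommGroup (E i)] [∀ i, Lattice (E i)] [∀ i, IsOrderedAddMonoid (E i)]
  [∀ i, HasSolidNorm (E i)] [∀ i, NormedSpace ℝ (E i)]
  {F : Type*} [NormedAddCommGroup F] [Lattice F] [IsOrderedAddMonoid F] [HasSolidNorm F]
  [NormedSpace ℝ F]

/-- A continuous `m`-linear form is positive if it is nonnegative on positive tuples. -/
def IsPosForm (φ : ContinuousMultilinearMap ℝ E ℝ) : Prop :=
  ∀ x : ∀ i, E i, (∀ i, 0 ≤ x i) → 0 ≤ φ x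

/-- The `ℓ_{p*}^n` norm of scalars, expressed by `ℓ_p`-duality. -/
noncomputable def dualLpNorm (p : ℝ) {n : ℕ} (lam : Fin n → ℝ) : ℝ :=
  ⨆ t : {t : Fin n → ℝ // (∑ i, |t i| ^ p) ^ (1 / p) ≤ 1}, |∑ i, t.1 i * lam i|

/-- `sup_{φ ∈ B⁺_{L^r}} (∑ᵢ φ(|x_i^1|,…,|x_i^m|)^q)^{1/q}`. -/
noncomputable def weakAbsTensorNorm (q : ℝ) {n : ℕ} (x : Fin n → ∀ j, E j) : ℝ :=
  ⨆ φ : {φ : ContinuousMultilinearMap ℝ E ℝ // ‖φ‖ ≤ 1 ∧ IsPosForm φ},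
    (∑ i, (φ.1 (fun j => |x i j|)) ^ q) ^ (1 / q)

/-- `sup_{y* ∈ B⁺_{F*}} (∑ᵢ ⟨y*, |y_i|⟩^r)^{1/r}`. -/
noncomputable def weakAbsLatticeNorm (r : ℝ) {n : ℕ} (y : Fin n → F) : ℝ :=
  ⨆ g : {g : F →L[ℝ] ℝ // ‖g‖ ≤ 1 ∧ ∀ z : F, 0 ≤ z → 0 ≤ g z},
    (∑ i, (g.1 |y i|) ^ r) ^ (1 / r)

/-- The tensor norm `μ⁺_{(q,r)}`. -/
noncomputable def muPlus (p q r : ℝ) (u : (⨂[ℝ] j, E j) ⊗[ℝ] F) : ℝ :=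
  sInf {c : ℝ | ∃ (n : ℕ) (lam : Fin n → ℝ) (x : Fin n → ∀ j, E j) (y : Fin n → F),
    u = ∑ i, lam i • ((⨂ₜ[ℝ] j, x i j) ⊗ₜ[ℝ] y i) ∧
    c = dualLpNorm p lam * weakAbsTensorNorm q x * weakAbsLatticeNorm r y}

/-- The functional `x₁ ⊗ ⋯ ⊗ x_m ⊗ y ↦ (∏ⱼ fⱼ(xⱼ)) · g(y)` on the algebraic tensor
product. -/
noncomputable def evalTensor (f : ∀ j, E j →L[ℝ] ℝ) (g : F →L[ℝ] ℝ) :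
    ((⨂[ℝ] j, E j) ⊗[ℝ] F) →ₗ[ℝ] ℝ :=
  (TensorProduct.lid ℝ ℝ).toLinearMap ∘ₗ
    TensorProduct.map
      (PiTensorProduct.lift
        ((MultilinearMap.mkPiAlgebra ℝ (Fin m) ℝ).compLinearMap fun j => (f j : E j →ₗ[ℝ] ℝ)))
      (g : F →ₗ[ℝ] ℝ)

/-- The injective tensor norm on `E₁ ⊗ ⋯ ⊗ E_m ⊗ F`. -/
noncomputable def injNorm (u : (⨂[ℝ] j, E j) ⊗[ℝ] F) : ℝ :=
  ⨆ fg : {fg : (∀ j, E j →L[ℝ] ℝ) × (F →L[ℝ] ℝ) // (∀ j, ‖fg.1 j‖ ≤ 1) ∧ ‖fg.2‖ ≤ 1},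
    |evalTensor fg.1.1 fg.1.2 u|

/-- The projective tensor norm on `E₁ ⊗ ⋯ ⊗ E_m ⊗ F`. -/
noncomputable def projNorm (u : (⨂[ℝ] j, E j) ⊗[ℝ] F) : ℝ :=
  sInf {c : ℝ | ∃ (n : ℕ) (lam : Fin n → ℝ) (x : Fin n → ∀ j, E j) (y : Fin n → F),
    u = ∑ i, lam i • ((⨂ₜ[ℝ] j, x i j) ⊗ₜ[ℝ] y i) ∧
    c = ∑ i, |lam i| * (∏ j, ‖x i j‖) * ‖y i‖}


section Helpers

variable {p q r : ℝ}

private lemma dualLpNorm_nonneg {n : ℕ} (lam : Fin n → ℝ) : 0 ≤ dualLpNorm p lam :=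
  Real.iSup_nonneg fun t => abs_nonneg _

private lemma dualLpNorm_bddAbove (hp : 0 < p) {n : ℕ} (lam : Fin n → ℝ) :
    BddAbove (Set.range fun t : {t : Fin n → ℝ // (∑ i, |t i| ^ p) ^ (1 / p) ≤ 1} =>
      |∑ i, t.1 i * lam i|) := by
  refine ⟨∑ i, |lam i|, ?_⟩
  rintro w ⟨t, rfl⟩
  calc |∑ i, t.1 i * lam i| ≤ ∑ i, |t.1 i * lam i| := Finset.abs_sum_le_sum_abs _ _
    _ ≤ ∑ i, |lam i| := by
        refine Finset.sum_le_sum fun i _ => ?_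
        rw [abs_mul]
        calc |t.1 i| * |lam i| ≤ 1 * |lam i| :=
              mul_le_mul_of_nonneg_right (abs_le_one_of_constraint hp t.2 i) (abs_nonneg _)
          _ = |lam i| := one_mul _

private lemma le_dualLpNorm (hp : 0 < p) {n : ℕ} (lam : Fin n → ℝ) {t : Fin n → ℝ}
    (ht : (∑ i, |t i| ^ p) ^ (1 / p) ≤ 1) :
    |∑ i, t i * lam i| ≤ dualLpNorm p lam :=
  le_ciSup (dualLpNorm_bddAbove hp lam) (⟨t, ht⟩ : {t : Fin n → ℝ // (∑ i, |t i| ^ p) ^ (1 / p) ≤ 1})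

private lemma dualLpNorm_le (hp : 0 < p) {n : ℕ} (lam : Fin n → ℝ) {C : ℝ} (hC : 0 ≤ C)
    (h : ∀ t : Fin n → ℝ, (∑ i, |t i| ^ p) ^ (1 / p) ≤ 1 → |∑ i, t i * lam i| ≤ C) :
    dualLpNorm p lam ≤ C :=
  Real.iSup_le (fun t => h t.1 t.2) hC

private lemma weakAbsTensorNorm_nonneg {n : ℕ} (x : Fin n → ∀ j, E j) :
    0 ≤ weakAbsTensorNorm q x :=
  Real.iSup_nonneg fun φ => Real.rpow_nonneg
    (Finset.sum_nonneg fun i _ => Real.rpow_nonneg (φ.2.2 _ fun j => abs_nonneg _) _) _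

private lemma weakAbsTensorNorm_val_le (hq : 0 < q) {n : ℕ} (x : Fin n → ∀ j, E j)
    (φ : {φ : ContinuousMultilinearMap ℝ E ℝ // ‖φ‖ ≤ 1 ∧ IsPosForm φ}) :
    (∑ i, (φ.1 (fun j => |x i j|)) ^ q) ^ (1 / q) ≤ (∑ i, (∏ j, ‖x i j‖) ^ q) ^ (1 / q) := by
  refine Real.rpow_le_rpow
    (Finset.sum_nonneg fun i _ => Real.rpow_nonneg (φ.2.2 _ fun j => abs_nonneg _) _)
    (Finset.sum_le_sum fun i _ => ?_) (by positivity)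
  refine Real.rpow_le_rpow (φ.2.2 _ fun j => abs_nonneg _) ?_ hq.le
  calc φ.1 (fun j => |x i j|) ≤ ‖φ.1 (fun j => |x i j|)‖ := le_abs_self _
    _ ≤ ‖φ.1‖ * ∏ j, ‖|x i j|‖ := φ.1.le_opNorm _
    _ ≤ 1 * ∏ j, ‖x i j‖ := by
        refine mul_le_mul φ.2.1 (le_of_eq ?_) (Finset.prod_nonneg fun j _ => norm_nonneg _)
          zero_le_one
        exact Finset.prod_congr rfl fun j _ => norm_abs_eq_norm _
    _ = ∏ j, ‖x i j‖ := one_mul _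

private lemma weakAbsTensorNorm_bddAbove (hq : 0 < q) {n : ℕ} (x : Fin n → ∀ j, E j) :
    BddAbove (Set.range fun φ : {φ : ContinuousMultilinearMap ℝ E ℝ // ‖φ‖ ≤ 1 ∧ IsPosForm φ} =>
      (∑ i, (φ.1 (fun j => |x i j|)) ^ q) ^ (1 / q)) := by
  refine ⟨(∑ i, (∏ j, ‖x i j‖) ^ q) ^ (1 / q), ?_⟩
  rintro w ⟨φ, rfl⟩
  exact weakAbsTensorNorm_val_le hq x φ

private lemma weakAbsTensorNorm_le (hq : 0 < q) {n : ℕ} (x : Fin n → ∀ j, E j) :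
    weakAbsTensorNorm q x ≤ (∑ i, (∏ j, ‖x i j‖) ^ q) ^ (1 / q) :=
  Real.iSup_le (fun φ => weakAbsTensorNorm_val_le hq x φ) (by positivity)

private lemma le_weakAbsTensorNorm (hq : 0 < q) {n : ℕ} (x : Fin n → ∀ j, E j)
    (φ : ContinuousMultilinearMap ℝ E ℝ) (hφ1 : ‖φ‖ ≤ 1) (hφ2 : IsPosForm φ) :
    (∑ i, (φ (fun j => |x i j|)) ^ q) ^ (1 / q) ≤ weakAbsTensorNorm q x :=
  le_ciSup (weakAbsTensorNorm_bddAbove hq x)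
    (⟨φ, hφ1, hφ2⟩ : {φ : ContinuousMultilinearMap ℝ E ℝ // ‖φ‖ ≤ 1 ∧ IsPosForm φ})

private lemma weakAbsLatticeNorm_nonneg {n : ℕ} (y : Fin n → F) :
    0 ≤ weakAbsLatticeNorm r y :=
  Real.iSup_nonneg fun g => Real.rpow_nonneg
    (Finset.sum_nonneg fun i _ => Real.rpow_nonneg (g.2.2 _ (abs_nonneg _)) _) _

private lemma weakAbsLatticeNorm_val_le (hr : 0 < r) {n : ℕ} (y : Fin n → F)
    (g : {g : F →L[ℝ] ℝ // ‖g‖ ≤ 1 ∧ ∀ z : F, 0 ≤ z → 0 ≤ g z}) :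
    (∑ i, (g.1 |y i|) ^ r) ^ (1 / r) ≤ (∑ i, ‖y i‖ ^ r) ^ (1 / r) := by
  refine Real.rpow_le_rpow
    (Finset.sum_nonneg fun i _ => Real.rpow_nonneg (g.2.2 _ (abs_nonneg _)) _)
    (Finset.sum_le_sum fun i _ => ?_) (by positivity)
  refine Real.rpow_le_rpow (g.2.2 _ (abs_nonneg _)) ?_ hr.le
  calc g.1 |y i| ≤ ‖g.1 |y i|‖ := le_abs_self _
    _ ≤ ‖g.1‖ * ‖|y i|‖ := g.1.le_opNorm _
    _ ≤ 1 * ‖y i‖ := by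
        rw [norm_abs_eq_norm]
        exact mul_le_mul_of_nonneg_right g.2.1 (norm_nonneg _)
    _ = ‖y i‖ := one_mul _

private lemma weakAbsLatticeNorm_bddAbove (hr : 0 < r) {n : ℕ} (y : Fin n → F) :
    BddAbove (Set.range fun g : {g : F →L[ℝ] ℝ // ‖g‖ ≤ 1 ∧ ∀ z : F, 0 ≤ z → 0 ≤ g z} =>
      (∑ i, (g.1 |y i|) ^ r) ^ (1 / r)) := by
  refine ⟨(∑ i, ‖y i‖ ^ r) ^ (1 / r), ?_⟩
  rintro w ⟨g, rfl⟩
  exact weakAbsLatticeNorm_val_le hr y g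

private lemma weakAbsLatticeNorm_le (hr : 0 < r) {n : ℕ} (y : Fin n → F) :
    weakAbsLatticeNorm r y ≤ (∑ i, ‖y i‖ ^ r) ^ (1 / r) :=
  Real.iSup_le (fun g => weakAbsLatticeNorm_val_le hr y g) (by positivity)

private lemma le_weakAbsLatticeNorm (hr : 0 < r) {n : ℕ} (y : Fin n → F)
    (g : F →L[ℝ] ℝ) (hg1 : ‖g‖ ≤ 1) (hg2 : ∀ z : F, 0 ≤ z → 0 ≤ g z) :
    (∑ i, (g |y i|) ^ r) ^ (1 / r) ≤ weakAbsLatticeNorm r y :=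
  le_ciSup (weakAbsLatticeNorm_bddAbove hr y)
    (⟨g, hg1, hg2⟩ : {g : F →L[ℝ] ℝ // ‖g‖ ≤ 1 ∧ ∀ z : F, 0 ≤ z → 0 ≤ g z})

end Helpers


section Holder

private lemma holder3 {p q r : ℝ} (hp : 1 ≤ p) (hq : 1 ≤ q) (hr : 1 ≤ r)
    (hpqr : 1 / p = 1 / q + 1 / r) {n : ℕ} (lam c d : Fin n → ℝ) :
    |∑ i, lam i * (c i * d i)| ≤
      dualLpNorm p lam * ((∑ i, |c i| ^ q) ^ (1 / q) * (∑ i, |d i| ^ r) ^ (1 / r)) := by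
  have hp0 : 0 < p := lt_of_lt_of_le one_pos hp
  have hq0 : 0 < q := lt_of_lt_of_le one_pos hq
  have hr0 : 0 < r := lt_of_lt_of_le one_pos hr
  have hSc : (0:ℝ) ≤ ∑ i, |c i| ^ q :=
    Finset.sum_nonneg fun i _ => Real.rpow_nonneg (abs_nonneg _) _
  have hSd : (0:ℝ) ≤ ∑ i, |d i| ^ r :=
    Finset.sum_nonneg fun i _ => Real.rpow_nonneg (abs_nonneg _) _
  have hCq0 : (0:ℝ) ≤ (∑ i, |c i| ^ q) ^ (1/q) := Real.rpow_nonneg hSc _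
  have hDr0 : (0:ℝ) ≤ (∑ i, |d i| ^ r) ^ (1/r) := Real.rpow_nonneg hSd _
  have rhs_nonneg : 0 ≤ dualLpNorm p lam * ((∑ i, |c i| ^ q) ^ (1/q) * (∑ i, |d i| ^ r) ^ (1/r)) :=
    mul_nonneg (dualLpNorm_nonneg lam) (mul_nonneg hCq0 hDr0)
  by_cases hc : ∑ i, |c i| ^ q = 0
  · have hzero : ∀ i, c i = 0 := by
      intro i
      have h1 := (Finset.sum_eq_zero_iff_of_nonneg
        (fun i _ => Real.rpow_nonneg (abs_nonneg (c i)) q)).mp hc i (Finset.mem_univ i)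
      have h2 : |c i| = 0 := by
        rwa [Real.rpow_eq_zero (abs_nonneg _) hq0.ne'] at h1
      exact abs_eq_zero.mp h2
    have hz : ∑ i, lam i * (c i * d i) = 0 :=
      Finset.sum_eq_zero fun i _ => by rw [hzero i]; ring
    rw [hz, abs_zero]; exact rhs_nonneg
  by_cases hd : ∑ i, |d i| ^ r = 0
  · have hzero : ∀ i, d i = 0 := by
      intro i
      have h1 := (Finset.sum_eq_zero_iff_of_nonneg
        (fun i _ => Real.rpow_nonneg (abs_nonneg (d i)) r)).mp hd i (Finset.mem_univ i)
      have h2 : |d i| = 0 := by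
        rwa [Real.rpow_eq_zero (abs_nonneg _) hr0.ne'] at h1
      exact abs_eq_zero.mp h2
    have hz : ∑ i, lam i * (c i * d i) = 0 :=
      Finset.sum_eq_zero fun i _ => by rw [hzero i]; ring
    rw [hz, abs_zero]; exact rhs_nonneg
  -- both sums positive
  have hScpos : (0:ℝ) < ∑ i, |c i| ^ q := lt_of_le_of_ne hSc (Ne.symm hc)
  have hSdpos : (0:ℝ) < ∑ i, |d i| ^ r := lt_of_le_of_ne hSd (Ne.symm hd)
  set Cq : ℝ := (∑ i, |c i| ^ q) ^ (1/q) with hCqdef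
  set Dr : ℝ := (∑ i, |d i| ^ r) ^ (1/r) with hDrdef
  have hCqpos : 0 < Cq := Real.rpow_pos_of_pos hScpos _
  have hDrpos : 0 < Dr := Real.rpow_pos_of_pos hSdpos _
  have hCDpos : 0 < Cq * Dr := mul_pos hCqpos hDrpos
  -- p < q and p < r
  have hpltq : p < q := by
    have h1 : 1/q < 1/p := by
      rw [hpqr]
      have : 0 < 1/r := by positivity
      linarith
    by_contra hcon
    push_neg at hcon
    have := one_div_le_one_div_of_le hq0 hcon
    linarith
  have hpltr : p < r := by
    have h1 : 1/r < 1/p := by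
      rw [hpqr]
      have : 0 < 1/q := by positivity
      linarith
    by_contra hcon
    push_neg at hcon
    have := one_div_le_one_div_of_le hr0 hcon
    linarith
  -- conjugate exponents q/p and r/p
  have hconj : (q/p).HolderConjugate (r/p) := by
    rw [Real.holderConjugate_iff]
    constructor
    · rw [lt_div_iff₀ hp0]; linarith
    · rw [inv_div, inv_div]
      field_simp at hpqr ⊢
      linarith [hpqr]
  -- Hoelder
  have key : ∑ i, |c i * d i| ^ p ≤ Cq ^ p * Dr ^ p := by
    have H := Real.inner_le_Lp_mul_Lq_of_nonneg Finset.univ hconj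
      (f := fun i => |c i| ^ p) (g := fun i => |d i| ^ p)
      (fun i _ => Real.rpow_nonneg (abs_nonneg _) _)
      (fun i _ => Real.rpow_nonneg (abs_nonneg _) _)
    have e1 : ∀ i : Fin n, (|c i| ^ p) ^ (q/p) = |c i| ^ q := fun i => by
      rw [← Real.rpow_mul (abs_nonneg _), mul_div_cancel₀ _ hp0.ne']
    have e2 : ∀ i : Fin n, (|d i| ^ p) ^ (r/p) = |d i| ^ r := fun i => by
      rw [← Real.rpow_mul (abs_nonneg _), mul_div_cancel₀ _ hp0.ne']
    have e3 : ∀ i : Fin n, |c i * d i| ^ p = |c i| ^ p * |d i| ^ p := fun i => by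
      rw [abs_mul, Real.mul_rpow (abs_nonneg _) (abs_nonneg _)]
    simp only [e1, e2, e3] at H ⊢
    have e4 : Cq ^ p = (∑ i, |c i| ^ q) ^ (p/q) := by
      rw [hCqdef, ← Real.rpow_mul hSc, one_div, inv_mul_eq_div]
    have e5 : Dr ^ p = (∑ i, |d i| ^ r) ^ (p/r) := by
      rw [hDrdef, ← Real.rpow_mul hSd, one_div, inv_mul_eq_div]
    rw [e4, e5]
    calc ∑ i, |c i| ^ p * |d i| ^ p
        ≤ (∑ i, |c i| ^ q) ^ (1/(q/p)) * (∑ i, |d i| ^ r) ^ (1/(r/p)) := H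
      _ = (∑ i, |c i| ^ q) ^ (p/q) * (∑ i, |d i| ^ r) ^ (p/r) := by
          rw [one_div_div, one_div_div]
  -- the test sequence
  set t : Fin n → ℝ := fun i => (c i * d i) / (Cq * Dr) with htdef
  have ht : (∑ i, |t i| ^ p) ^ (1/p) ≤ 1 := by
    have h1 : ∑ i, |t i| ^ p ≤ 1 := by
      have e : ∀ i : Fin n, |t i| ^ p = |c i * d i| ^ p / (Cq * Dr) ^ p := fun i => by
        rw [htdef]
        simp only
        rw [abs_div, abs_of_pos hCDpos, Real.div_rpow (abs_nonneg _) hCDpos.le]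
      simp only [e]
      rw [← Finset.sum_div, div_le_one (Real.rpow_pos_of_pos hCDpos _)]
      calc ∑ i, |c i * d i| ^ p ≤ Cq ^ p * Dr ^ p := key
        _ = (Cq * Dr) ^ p := (Real.mul_rpow hCqpos.le hDrpos.le).symm
    exact Real.rpow_le_one (Finset.sum_nonneg fun i _ =>
      Real.rpow_nonneg (abs_nonneg _) _) h1 (by positivity)
  have h2 := le_dualLpNorm hp0 lam ht
  have e6 : ∑ i, t i * lam i = (∑ i, lam i * (c i * d i)) / (Cq * Dr) := by
    rw [Finset.sum_div]
    exact Finset.sum_congr rfl fun i _ => by rw [htdef]; ring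
  rw [e6, abs_div, abs_of_pos hCDpos, div_le_iff₀ hCDpos] at h2
  calc |∑ i, lam i * (c i * d i)| ≤ dualLpNorm p lam * (Cq * Dr) := h2
    _ = dualLpNorm p lam * (Cq * Dr) := rfl

end Holder

section Rep

private lemma rep_add {u v : (⨂[ℝ] j, E j) ⊗[ℝ] F}
    (hu : ∃ (n : ℕ) (lam : Fin n → ℝ) (x : Fin n → ∀ j, E j) (y : Fin n → F),
      u = ∑ i, lam i • ((⨂ₜ[ℝ] j, x i j) ⊗ₜ[ℝ] y i))
    (hv : ∃ (n : ℕ) (lam : Fin n → ℝ) (x : Fin n → ∀ j, E j) (y : Fin n → F),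
      v = ∑ i, lam i • ((⨂ₜ[ℝ] j, x i j) ⊗ₜ[ℝ] y i)) :
    ∃ (n : ℕ) (lam : Fin n → ℝ) (x : Fin n → ∀ j, E j) (y : Fin n → F),
      u + v = ∑ i, lam i • ((⨂ₜ[ℝ] j, x i j) ⊗ₜ[ℝ] y i) := by
  obtain ⟨n1, l1, x1, y1, rfl⟩ := hu
  obtain ⟨n2, l2, x2, y2, rfl⟩ := hv
  refine ⟨n1 + n2, Fin.append l1 l2, Fin.append x1 x2, Fin.append y1 y2, ?_⟩
  rw [Fin.sum_univ_add]
  congr 1 <;> exact Finset.sum_congr rfl fun i _ => by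
    simp [Fin.append_left, Fin.append_right]

private lemma exists_rep (u : (⨂[ℝ] j, E j) ⊗[ℝ] F) :
    ∃ (n : ℕ) (lam : Fin n → ℝ) (x : Fin n → ∀ j, E j) (y : Fin n → F),
      u = ∑ i, lam i • ((⨂ₜ[ℝ] j, x i j) ⊗ₜ[ℝ] y i) := by
  induction u using TensorProduct.induction_on with
  | zero => exact ⟨0, Fin.elim0, Fin.elim0, Fin.elim0, by simp⟩
  | tmul t y =>
      induction t using PiTensorProduct.induction_on with
      | smul_tprod lam x =>
          refine ⟨1, fun _ => lam, fun _ => x, fun _ => y, ?_⟩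
          rw [Fin.sum_univ_one, TensorProduct.smul_tmul']
      | add t1 t2 h1 h2 =>
          rw [TensorProduct.add_tmul]
          exact rep_add h1 h2
  | add u v h1 h2 => exact rep_add h1 h2

end Rep

section Eval

private lemma evalTensor_apply (f : ∀ j, E j →L[ℝ] ℝ) (g : F →L[ℝ] ℝ) {n : ℕ}
    (lam : Fin n → ℝ) (x : Fin n → ∀ j, E j) (y : Fin n → F) :
    evalTensor f g (∑ i, lam i • ((⨂ₜ[ℝ] j, x i j) ⊗ₜ[ℝ] y i)) =
      ∑ i, lam i * ((∏ j, f j (x i j)) * g (y i)) := by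
  rw [map_sum]
  refine Finset.sum_congr rfl fun i _ => ?_
  rw [map_smul]
  simp [evalTensor, TensorProduct.map_tmul, PiTensorProduct.lift.tprod,
    MultilinearMap.compLinearMap_apply, MultilinearMap.mkPiAlgebra_apply, smul_eq_mul]

end Eval

/-- `ε ≤ μ⁺_{(q,r)} ≤ π`: the norm `μ⁺_{(q,r)}` is reasonable. -/
theorem injNorm_le_muPlus_le_projNorm [∀ i, CompleteSpace (E i)] [CompleteSpace F]
    (p q r : ℝ) (hp : 1 ≤ p) (hq : 1 ≤ q) (hr : 1 ≤ r) (hpqr : 1 / p = 1 / q + 1 / r)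
    (u : (⨂[ℝ] j, E j) ⊗[ℝ] F) :
    injNorm u ≤ muPlus p q r u ∧ muPlus p q r u ≤ projNorm u := by
  classical
  have hp0 : (0:ℝ) < p := lt_of_lt_of_le one_pos hp
  have hq0 : (0:ℝ) < q := lt_of_lt_of_le one_pos hq
  have hr0 : (0:ℝ) < r := lt_of_lt_of_le one_pos hr
  obtain ⟨n0, l0, x0, y0, hrep0⟩ := exists_rep u
  have hmuNonempty : {c : ℝ | ∃ (n : ℕ) (lam : Fin n → ℝ) (x : Fin n → ∀ j, E j) (y : Fin n → F),
      u = ∑ i, lam i • ((⨂ₜ[ℝ] j, x i j) ⊗ₜ[ℝ] y i) ∧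
      c = dualLpNorm p lam * weakAbsTensorNorm q x * weakAbsLatticeNorm r y}.Nonempty :=
    ⟨_, n0, l0, x0, y0, hrep0, rfl⟩
  have hmuBdd : BddBelow {c : ℝ | ∃ (n : ℕ) (lam : Fin n → ℝ) (x : Fin n → ∀ j, E j)
      (y : Fin n → F), u = ∑ i, lam i • ((⨂ₜ[ℝ] j, x i j) ⊗ₜ[ℝ] y i) ∧
      c = dualLpNorm p lam * weakAbsTensorNorm q x * weakAbsLatticeNorm r y} := by
    refine ⟨0, ?_⟩
    rintro c ⟨n, lam, x, y, -, rfl⟩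
    exact mul_nonneg (mul_nonneg (dualLpNorm_nonneg lam) (weakAbsTensorNorm_nonneg x))
      (weakAbsLatticeNorm_nonneg y)
  constructor
  · -- injNorm ≤ muPlus
    refine le_csInf hmuNonempty ?_
    rintro c ⟨n, lam, x, y, hrep, rfl⟩
    have hcnn : 0 ≤ dualLpNorm p lam * weakAbsTensorNorm q x * weakAbsLatticeNorm r y :=
      mul_nonneg (mul_nonneg (dualLpNorm_nonneg lam) (weakAbsTensorNorm_nonneg x))
        (weakAbsLatticeNorm_nonneg y)
    refine Real.iSup_le (fun fg => ?_) hcnn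
    obtain ⟨⟨f, g⟩, hf, hg⟩ := fg
    simp only at hf hg ⊢
    rw [hrep, evalTensor_apply]
    have H := holder3 hp hq hr hpqr lam (fun i => ∏ j, f j (x i j)) (fun i => g (y i))
    refine H.trans ?_
    rw [mul_assoc]
    refine mul_le_mul_of_nonneg_left ?_ (dualLpNorm_nonneg lam)
    -- build the positive multilinear form from moduli
    set φ0 : ContinuousMultilinearMap ℝ E ℝ :=
      (ContinuousMultilinearMap.mkPiAlgebra ℝ (Fin m) ℝ).compContinuousLinearMap
        (fun j => modCLM (f j)) with hφ0
    have hφ0app : ∀ z : ∀ j, E j, φ0 z = ∏ j, modCLM (f j) (z j) := fun z => by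
      simp [hφ0]
    have hφ0norm : ‖φ0‖ ≤ 1 := by
      calc ‖φ0‖ ≤ ‖ContinuousMultilinearMap.mkPiAlgebra ℝ (Fin m) ℝ‖ * ∏ j, ‖modCLM (f j)‖ :=
            ContinuousMultilinearMap.norm_compContinuousLinearMap_le _ _
        _ ≤ 1 * 1 := by
            refine mul_le_mul (le_of_eq ContinuousMultilinearMap.norm_mkPiAlgebra)
              (Finset.prod_le_one (fun j _ => norm_nonneg _)
                (fun j _ => (modCLM_norm_le (f j)).trans (hf j))) 
              (Finset.prod_nonneg fun j _ => norm_nonneg _) zero_le_one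
        _ = 1 := one_mul 1
    have hφ0pos : IsPosForm φ0 := by
      intro z hz
      rw [hφ0app]
      exact Finset.prod_nonneg fun j _ => modCLM_pos (f j) (hz j)
    have hgmod := modCLM g
    have hc1 : (∑ i, |∏ j, f j (x i j)| ^ q) ^ (1/q) ≤ weakAbsTensorNorm q x := by
      refine le_trans ?_ (le_weakAbsTensorNorm hq0 x φ0 hφ0norm hφ0pos)
      refine Real.rpow_le_rpow (Finset.sum_nonneg fun i _ =>
        Real.rpow_nonneg (abs_nonneg _) _) (Finset.sum_le_sum fun i _ => ?_) (by positivity)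
      refine Real.rpow_le_rpow (abs_nonneg _) ?_ hq0.le
      rw [hφ0app, Finset.abs_prod]
      exact Finset.prod_le_prod (fun j _ => abs_nonneg _)
        (fun j _ => abs_apply_le_modCLM_abs (f j) (x i j))
    have hc2 : (∑ i, |g (y i)| ^ r) ^ (1/r) ≤ weakAbsLatticeNorm r y := by
      refine le_trans ?_ (le_weakAbsLatticeNorm hr0 y (modCLM g)
        ((modCLM_norm_le g).trans hg) (fun z hz => modCLM_pos g hz))
      refine Real.rpow_le_rpow (Finset.sum_nonneg fun i _ =>
        Real.rpow_nonneg (abs_nonneg _) _) (Finset.sum_le_sum fun i _ => ?_) (by positivity)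
      refine Real.rpow_le_rpow (abs_nonneg _) (abs_apply_le_modCLM_abs g (y i)) hr0.le
    refine mul_le_mul hc1 hc2 ?_ (weakAbsTensorNorm_nonneg x)
    exact Real.rpow_nonneg (Finset.sum_nonneg fun i _ =>
      Real.rpow_nonneg (abs_nonneg _) _) _
  · -- muPlus ≤ projNorm
    refine le_csInf ⟨_, n0, l0, x0, y0, hrep0, rfl⟩ ?_
    rintro c ⟨n, lam, x, y, hrep, rfl⟩
    rcases Nat.eq_zero_or_pos m with hm | hm
    · -- m = 0 : collapse to a single term
      subst hm
      set w : F := ∑ i, lam i • y i with hw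
      set x₀ : ∀ j : Fin 0, E j := fun j => j.elim0 with hx₀
      have htp : ∀ f : ∀ j : Fin 0, E j, (⨂ₜ[ℝ] j, f j) = ⨂ₜ[ℝ] j, x₀ j := by
        intro f
        apply (PiTensorProduct.isEmptyEquiv (Fin 0)).injective
        simp [PiTensorProduct.isEmptyEquiv_apply_tprod]
      have hrep' : u = ∑ i : Fin 1, (fun _ : Fin 1 => (1:ℝ)) i •
          ((⨂ₜ[ℝ] j, (fun _ : Fin 1 => x₀) i j) ⊗ₜ[ℝ] (fun _ : Fin 1 => w) i) := by
        rw [Fin.sum_univ_one, one_smul, hrep, hw, TensorProduct.tmul_sum]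
        refine Finset.sum_congr rfl fun i _ => ?_
        rw [htp (x i), TensorProduct.tmul_smul]
      refine le_trans (csInf_le hmuBdd ⟨1, _, _, _, hrep', rfl⟩) ?_
      have b1 : dualLpNorm p (fun _ : Fin 1 => (1:ℝ)) ≤ 1 := by
        refine dualLpNorm_le hp0 _ zero_le_one ?_
        intro t ht
        have := abs_le_one_of_constraint hp0 ht 0
        calc |∑ i : Fin 1, t i * 1| = |t 0| := by rw [Fin.sum_univ_one, mul_one]
          _ ≤ 1 := this
      have b2 : weakAbsTensorNorm q (fun _ : Fin 1 => x₀) ≤ 1 := by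
        refine (weakAbsTensorNorm_le hq0 _).trans (le_of_eq ?_)
        simp [Real.one_rpow]
      have b3 : weakAbsLatticeNorm r (fun _ : Fin 1 => w) ≤ ‖w‖ := by
        refine (weakAbsLatticeNorm_le hr0 _).trans (le_of_eq ?_)
        rw [Fin.sum_univ_one, ← Real.rpow_mul (norm_nonneg w), mul_one_div_cancel hr0.ne',
          Real.rpow_one]
      have hwle : ‖w‖ ≤ ∑ i, |lam i| * (∏ j : Fin 0, ‖x i j‖) * ‖y i‖ := by
        calc ‖w‖ ≤ ∑ i, ‖lam i • y i‖ := norm_sum_le _ _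
          _ = ∑ i, |lam i| * (∏ j : Fin 0, ‖x i j‖) * ‖y i‖ := by
              refine Finset.sum_congr rfl fun i _ => ?_
              rw [norm_smul, Real.norm_eq_abs]
              simp
      calc dualLpNorm p (fun _ : Fin 1 => (1:ℝ)) * weakAbsTensorNorm q (fun _ : Fin 1 => x₀) *
            weakAbsLatticeNorm r (fun _ : Fin 1 => w)
          ≤ 1 * 1 * ‖w‖ := by
            refine mul_le_mul (mul_le_mul b1 b2 (weakAbsTensorNorm_nonneg _)
              zero_le_one) b3 (weakAbsLatticeNorm_nonneg _) (by norm_num)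
        _ = ‖w‖ := by ring
        _ ≤ _ := hwle
    · -- m ≥ 1
      set j0 : Fin m := ⟨0, hm⟩ with hj0
      set a : Fin n → ℝ := fun i => |lam i| * (∏ j, ‖x i j‖) * ‖y i‖ with ha
      have hanonneg : ∀ i, 0 ≤ a i := fun i => by
        rw [ha]
        positivity
      set A : ℝ := ∑ i, a i with hA
      have hAnonneg : 0 ≤ A := Finset.sum_nonneg fun i _ => hanonneg i
      set lam' : Fin n → ℝ := fun i => if a i = 0 then 0 else
        lam i * ((∏ j, ‖x i j‖) * ‖y i‖) * a i ^ (-(1/p)) with hlam'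
      set x' : Fin n → ∀ j, E j := fun i j => if a i = 0 then 0 else
        ((if j = j0 then a i ^ (1/q) else 1) * ‖x i j‖⁻¹) • x i j with hx'
      set y' : Fin n → F := fun i => if a i = 0 then 0 else
        (a i ^ (1/r) * ‖y i‖⁻¹) • y i with hy'
      -- auxiliary facts when a i ≠ 0
      have hfacts : ∀ i, a i ≠ 0 → lam i ≠ 0 ∧ (∀ j, ‖x i j‖ ≠ 0) ∧ ‖y i‖ ≠ 0 ∧ 0 < a i := by
        intro i hai
        have h1 : |lam i| ≠ 0 := fun h => hai (by rw [ha]; simp [h])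
        have h2 : (∏ j, ‖x i j‖) ≠ 0 := fun h => hai (by rw [ha]; simp [h])
        have h3 : ‖y i‖ ≠ 0 := fun h => hai (by rw [ha]; simp [h])
        refine ⟨fun h => h1 (by rw [h, abs_zero]), fun j hj => h2 ?_, h3,
          lt_of_le_of_ne (hanonneg i) (Ne.symm hai)⟩
        exact Finset.prod_eq_zero (Finset.mem_univ j) hj
      -- representation equality
      have hrep' : u = ∑ i, lam' i • ((⨂ₜ[ℝ] j, x' i j) ⊗ₜ[ℝ] y' i) := by
        rw [hrep]
        refine Finset.sum_congr rfl fun i _ => ?_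
        by_cases hai : a i = 0
        · -- the original term is zero
          have hterm : lam i • ((⨂ₜ[ℝ] j, x i j) ⊗ₜ[ℝ] y i) = 0 := by
            rw [ha] at hai
            rcases mul_eq_zero.mp hai with h | h
            · rcases mul_eq_zero.mp h with h' | h'
              · rw [abs_eq_zero.mp h', zero_smul]
              · obtain ⟨j, -, hj⟩ := Finset.prod_eq_zero_iff.mp h'
                rw [norm_eq_zero] at hj
                have : (⨂ₜ[ℝ] j, x i j) = 0 := MultilinearMap.map_coord_zero _ j hj
                rw [this, TensorProduct.zero_tmul, smul_zero]
            · rw [norm_eq_zero] at h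
              rw [h, TensorProduct.tmul_zero, smul_zero]
          rw [hterm, hlam']
          simp [hai]
        · obtain ⟨hlamne, hxne, hyne, hapos⟩ := hfacts i hai
          have hxs : (fun j => x' i j) =
              fun j => ((if j = j0 then a i ^ (1/q) else 1) * ‖x i j‖⁻¹) • x i j := by
            funext j
            rw [hx']
            simp [hai]
          have htp : (⨂ₜ[ℝ] j, x' i j) =
              ((a i ^ (1/q)) * ∏ j, ‖x i j‖⁻¹) • ⨂ₜ[ℝ] j, x i j := by
            rw [show (⨂ₜ[ℝ] j, x' i j) = tprod ℝ (fun j => x' i j) from rfl, hxs,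
              MultilinearMap.map_smul_univ]
            congr 1
            rw [Finset.prod_mul_distrib, Finset.prod_ite_eq' Finset.univ j0
              (fun _ => a i ^ (1/q))]
            simp
          have hys : y' i = (a i ^ (1/r) * ‖y i‖⁻¹) • y i := by
            rw [hy']; simp [hai]
          rw [htp, hys, TensorProduct.tmul_smul, ← TensorProduct.smul_tmul', smul_smul,
            smul_smul]
          congr 1
          rw [hlam']
          simp only [hai, if_false]
          have hrpow : a i ^ (-(1/p)) * (a i ^ (1/q) * a i ^ (1/r)) = 1 := by
            have he : (-(1/p) + (1/q + 1/r) : ℝ) = 0 := by rw [← hpqr]; ring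
            rw [← Real.rpow_add hapos, ← Real.rpow_add hapos, he, Real.rpow_zero]
          have hprodx : (∏ j, ‖x i j‖) * ∏ j, ‖x i j‖⁻¹ = 1 := by
            rw [← Finset.prod_mul_distrib]
            exact Finset.prod_eq_one fun j _ => mul_inv_cancel₀ (hxne j)
          have hyy : ‖y i‖ * ‖y i‖⁻¹ = 1 := mul_inv_cancel₀ hyne
          calc lam i = lam i * (((∏ j, ‖x i j‖) * ∏ j, ‖x i j‖⁻¹) * ((‖y i‖ * ‖y i‖⁻¹) *
                (a i ^ (-(1/p)) * (a i ^ (1/q) * a i ^ (1/r))))) := by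
                rw [hprodx, hyy, hrpow]; ring
            _ = lam i * ((∏ j, ‖x i j‖) * ‖y i‖) * a i ^ (-(1/p)) *
                (a i ^ (1/r) * ‖y i‖⁻¹) * (a i ^ (1/q) * ∏ j, ‖x i j‖⁻¹) := by ring
      -- three bounds
      have habs : ∀ i, |lam' i| = if a i = 0 then 0 else a i ^ (1 - 1/p) := by
        intro i
        by_cases hai : a i = 0
        · simp [hlam', hai]
        · obtain ⟨hlamne, hxne, hyne, hapos⟩ := hfacts i hai
          rw [hlam']
          simp only [hai, if_false]
          rw [abs_mul, abs_mul, abs_of_nonneg (Real.rpow_nonneg (hanonneg i) _),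
            abs_of_nonneg (mul_nonneg (Finset.prod_nonneg fun j _ => norm_nonneg _)
              (norm_nonneg _))]
          have e : |lam i| * ((∏ j, ‖x i j‖) * ‖y i‖) = a i := by rw [ha]; ring
          rw [e]
          nth_rewrite 1 [← Real.rpow_one (a i)]
          rw [← Real.rpow_add hapos]
          congr 1
      have b1 : dualLpNorm p lam' ≤ A ^ (1 - 1/p) := by
        refine dualLpNorm_le hp0 _ (Real.rpow_nonneg hAnonneg _) ?_
        intro t ht
        have step1 : |∑ i, t i * lam' i| ≤ ∑ i, |t i| * a i ^ (1 - 1/p) := by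
          calc |∑ i, t i * lam' i| ≤ ∑ i, |t i * lam' i| := Finset.abs_sum_le_sum_abs _ _
            _ ≤ ∑ i, |t i| * a i ^ (1 - 1/p) := by
                refine Finset.sum_le_sum fun i _ => ?_
                rw [abs_mul]
                refine mul_le_mul_of_nonneg_left ?_ (abs_nonneg _)
                rw [habs i]
                by_cases hai : a i = 0
                · simp only [hai, if_true]
                  exact Real.rpow_nonneg le_rfl _
                · simp [hai]
        rcases eq_or_lt_of_le hp with hp1 | hp1
        · -- p = 1
          have hexp : (1:ℝ) - 1/p = 0 := by rw [← hp1]; norm_num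
          rw [hexp, Real.rpow_zero]
          refine step1.trans ?_
          simp only [hexp, Real.rpow_zero, mul_one]
          have h2 := sum_rpow_le_one hp0 ht
          have h3 : ∑ i, |t i| = ∑ i, |t i| ^ p := Finset.sum_congr rfl fun i _ => by
            rw [← hp1, Real.rpow_one]
          rw [h3]; exact h2
        · -- 1 < p
          have hpq' : p.HolderConjugate (Real.conjExponent p) :=
            Real.HolderConjugate.conjExponent hp1
          have H := Real.inner_le_Lp_mul_Lq_of_nonneg Finset.univ hpq'
            (f := fun i => |t i|) (g := fun i => a i ^ (1 - 1/p))
            (fun i _ => abs_nonneg _) (fun i _ => Real.rpow_nonneg (hanonneg i) _)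
          refine step1.trans (H.trans ?_)
          have hp1' : p - 1 ≠ 0 := by linarith
          have e1 : ∀ i : Fin n, (a i ^ (1 - 1/p)) ^ (Real.conjExponent p) = a i := fun i => by
            rw [← Real.rpow_mul (hanonneg i)]
            have h5 : (1 - 1/p) * Real.conjExponent p = 1 := by
              rw [Real.conjExponent]
              field_simp
            rw [h5, Real.rpow_one]
          have e2 : 1 / Real.conjExponent p = 1 - 1/p := by
            rw [Real.conjExponent, one_div_div]
            field_simp
          calc (∑ i, |t i| ^ p) ^ (1/p) *
                (∑ i, (a i ^ (1 - 1/p)) ^ Real.conjExponent p) ^ (1/Real.conjExponent p)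
              ≤ 1 * A ^ (1 - 1/p) := by
                refine mul_le_mul ht (le_of_eq ?_)
                  (Real.rpow_nonneg (Finset.sum_nonneg fun i _ =>
                    Real.rpow_nonneg (Real.rpow_nonneg (hanonneg i) _) _) _) zero_le_one
                rw [Finset.sum_congr rfl (fun i _ => e1 i), e2, ← hA]
            _ = A ^ (1 - 1/p) := one_mul _
      have b2 : weakAbsTensorNorm q x' ≤ A ^ (1/q) := by
        refine (weakAbsTensorNorm_le hq0 x').trans (le_of_eq ?_)
        have e : ∀ i : Fin n, (∏ j, ‖x' i j‖) ^ q = a i := by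
          intro i
          by_cases hai : a i = 0
          · have hz : x' i j0 = 0 := by rw [hx']; simp [hai]
            rw [Finset.prod_eq_zero (Finset.mem_univ j0) (by rw [hz, norm_zero]),
              Real.zero_rpow hq0.ne']
            exact hai.symm
          · obtain ⟨hlamne, hxne, hyne, hapos⟩ := hfacts i hai
            have hnorm : ∀ j, ‖x' i j‖ = (if j = j0 then a i ^ (1/q) else 1) := fun j => by
              rw [hx']
              simp only [hai, if_false]
              rw [norm_smul, Real.norm_eq_abs, abs_mul,
                abs_of_nonneg (show (0:ℝ) ≤ if j = j0 then a i ^ (1/q) else 1 by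
                  split_ifs
                  exacts [Real.rpow_nonneg (hanonneg i) _, zero_le_one]),
                abs_of_nonneg (inv_nonneg.mpr (norm_nonneg _)), mul_assoc,
                inv_mul_cancel₀ (hxne j), mul_one]
            rw [show (∏ j, ‖x' i j‖) = ∏ j, (if j = j0 then a i ^ (1/q) else 1) from
              Finset.prod_congr rfl fun j _ => hnorm j,
              Finset.prod_ite_eq' Finset.univ j0 (fun _ => a i ^ (1/q))]
            simp only [Finset.mem_univ, if_true]
            rw [← Real.rpow_mul (hanonneg i), one_div_mul_cancel hq0.ne', Real.rpow_one]
        rw [show (∑ i, (∏ j, ‖x' i j‖) ^ q) = A from by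
          rw [hA]; exact Finset.sum_congr rfl fun i _ => e i]
      have b3 : weakAbsLatticeNorm r y' ≤ A ^ (1/r) := by
        refine (weakAbsLatticeNorm_le hr0 y').trans (le_of_eq ?_)
        have e : ∀ i : Fin n, ‖y' i‖ ^ r = a i := by
          intro i
          by_cases hai : a i = 0
          · simp [hy', hai, Real.zero_rpow hr0.ne']
          · obtain ⟨hlamne, hxne, hyne, hapos⟩ := hfacts i hai
            rw [hy']
            simp only [hai, if_false]
            rw [norm_smul, Real.norm_eq_abs, abs_mul,
              abs_of_nonneg (Real.rpow_nonneg (hanonneg i) _),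
              abs_of_nonneg (inv_nonneg.mpr (norm_nonneg _)), mul_assoc,
              inv_mul_cancel₀ hyne, mul_one, ← Real.rpow_mul (hanonneg i),
              one_div_mul_cancel hr0.ne', Real.rpow_one]
        rw [show (∑ i, ‖y' i‖ ^ r) = A from by
          rw [hA]; exact Finset.sum_congr rfl fun i _ => e i]
      refine le_trans (csInf_le hmuBdd ⟨n, lam', x', y', hrep', rfl⟩) ?_
      have hgoal : A ^ (1 - 1/p) * A ^ (1/q) * A ^ (1/r) = A := by
        rcases eq_or_lt_of_le hAnonneg with hA0 | hA0
        · rw [← hA0, Real.zero_rpow (show (1:ℝ)/q ≠ 0 from (by positivity : (0:ℝ) < 1/q).ne')]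
          ring
        · rw [← Real.rpow_add hA0, ← Real.rpow_add hA0,
            show (1 - 1/p + 1/q + 1/r : ℝ) = 1 by rw [hpqr]; ring, Real.rpow_one]
      calc dualLpNorm p lam' * weakAbsTensorNorm q x' * weakAbsLatticeNorm r y'
          ≤ A ^ (1 - 1/p) * A ^ (1/q) * A ^ (1/r) := by
            refine mul_le_mul (mul_le_mul b1 b2 (weakAbsTensorNorm_nonneg _)
              (Real.rpow_nonneg hAnonneg _)) b3 (weakAbsLatticeNorm_nonneg _)
              (mul_nonneg (Real.rpow_nonneg hAnonneg _) (Real.rpow_nonneg hAnonneg _))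
        _ = A := hgoal
        _ ≤ ∑ i, |lam i| * (∏ j, ‖x i j‖) * ‖y i‖ := le_of_eq (by rw [hA])

end
end

section
/- Let 1 ≤ p, q, r ≤ ∞ with 1/p = 1/q + 1/r. If T : E₁ × ⋯ × E_m → F factors as T = u ∘ S where S : E₁ × ⋯ × E_m → G is a positive Dimant strongly q-summing m-linear operator (admitting a domination (∗): ‖S(x¹,...,x^m)‖ ≤ d_{s}(S)(∫_{B⁺} φ(x¹,...,x^m)^q dμ)^{1/q} on positive tuples) and u : G → F is a Cohen positive strongly r-summing linear operator (admitting ⟨u(z), y*⟩ ≤ d(u)‖z‖(∫_{B⁺_{F**}} ⟨y*, y**⟩^r dη)^{1/r} for z ≥ 0, y* ≥ 0), then T is positive weakly (q,r)-dominated. -/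
open scoped BigOperators
open MeasureTheory

section

variable {m : ℕ} {E : Fin m → Type*}
  [∀ i, NormedAddCommGroup (E i)] [∀ i, Lattice (E i)]
  [∀ i, IsOrderedAddMonoid (E i)] [∀ i, HasSolidNorm (E i)] [∀ i, NormedSpace ℝ (E i)]
  {G F : Type*} [NormedAddCommGroup G] [Lattice G] [IsOrderedAddMonoid G]
  [HasSolidNorm G] [NormedSpace ℝ G]
  [NormedAddCommGroup F] [Lattice F] [IsOrderedAddMonoid F]
  [HasSolidNorm F] [NormedSpace ℝ F]

/-- A functional on a Banach lattice is positive if it is nonnegative on the positive cone. -/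
def IsPosFunc {H : Type*} [NormedAddCommGroup H] [Lattice H]
    [IsOrderedAddMonoid H] [HasSolidNorm H] [NormedSpace ℝ H]
    (f : H →L[ℝ] ℝ) : Prop := ∀ y : H, 0 ≤ y → 0 ≤ f y

/-- `sup_{φ ∈ B⁺_{L^r}} (∑ᵢ φ(x_i^1,…,x_i^m)^q)^{1/q}`. -/
noncomputable def posFormBallSup (q : ℝ) {n : ℕ} (x : Fin n → ∀ j, E j) : ℝ :=
  ⨆ φ : {φ : ContinuousMultilinearMap ℝ E ℝ // ‖φ‖ ≤ 1 ∧ IsPosForm φ},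
    (∑ i, (φ.1 (x i)) ^ q) ^ (1 / q)

/-- `sup_{y** ∈ B⁺_{F**}} (∑ᵢ ⟨y_i*, y**⟩^r)^{1/r}`. -/
noncomputable def posBidualBallSup (r : ℝ) {n : ℕ} (y : Fin n → F →L[ℝ] ℝ) : ℝ :=
  ⨆ Φ : {Φ : (F →L[ℝ] ℝ) →L[ℝ] ℝ // ‖Φ‖ ≤ 1 ∧ ∀ g, IsPosFunc g → 0 ≤ Φ g},
    (∑ i, (Φ.1 (y i)) ^ r) ^ (1 / r)

/-- `T` is positive weakly `(q,r)`-dominated with constant `C`. -/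
def PWDC (p q r : ℝ) (T : ContinuousMultilinearMap ℝ E F) (C : ℝ) : Prop :=
  ∀ (n : ℕ) (x : Fin n → ∀ j, E j) (y : Fin n → F →L[ℝ] ℝ),
    (∀ i j, 0 ≤ x i j) → (∀ i, IsPosFunc (y i)) →
    (∑ i, ((y i) (T (x i))) ^ p) ^ (1 / p) ≤
      C * posFormBallSup q x * posBidualBallSup r y

noncomputable local instance :
    MeasurableSpace {φ : ContinuousMultilinearMap ℝ E ℝ // ‖φ‖ ≤ 1 ∧ IsPosForm φ} :=
  borel _

noncomputable local instance :
    MeasurableSpace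
      {Φ : (F →L[ℝ] ℝ) →L[ℝ] ℝ // ‖Φ‖ ≤ 1 ∧ ∀ g, IsPosFunc g → 0 ≤ Φ g} :=
  borel _

/-- Auxiliary: sum of integrals of nonnegative functions whose pointwise sum is bounded by a
constant is bounded by that constant (probability measure); no measurability assumed. -/
private lemma sum_integral_le_of_forall_sum_le {α : Type*} [MeasurableSpace α]
    (μ : Measure α) [IsProbabilityMeasure μ] {n : ℕ} (f : Fin n → α → ℝ)
    (hf : ∀ i a, 0 ≤ f i a) {C : ℝ} (hC : ∀ a, ∑ i, f i a ≤ C) :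
    ∑ i, ∫ a, f i a ∂μ ≤ C := by
  classical
  set s : Finset (Fin n) := Finset.univ.filter fun i => Integrable (f i) μ with hs
  have hmem : ∀ i ∈ s, Integrable (f i) μ := fun i hi => (Finset.mem_filter.mp hi).2
  have h1 : ∑ i, ∫ a, f i a ∂μ = ∑ i ∈ s, ∫ a, f i a ∂μ := by
    refine (Finset.sum_subset (Finset.subset_univ s) ?_).symm
    intro i _ hi
    have : ¬ Integrable (f i) μ := by
      intro h; exact hi (Finset.mem_filter.mpr ⟨Finset.mem_univ i, h⟩)
    exact integral_undef this
  have h2 : ∑ i ∈ s, ∫ a, f i a ∂μ = ∫ a, ∑ i ∈ s, f i a ∂μ :=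
    (integral_finset_sum s hmem).symm
  have h3 : ∫ a, ∑ i ∈ s, f i a ∂μ ≤ ∫ _, C ∂μ := by
    refine integral_mono (integrable_finset_sum s hmem) (integrable_const C) fun a => ?_
    exact le_trans (Finset.sum_le_sum_of_subset_of_nonneg (Finset.subset_univ s)
      (fun i _ _ => hf i a)) (hC a)
  have h4 : ∫ _, C ∂μ = C := by simp
  rw [h1, h2]; rw [h4] at h3; exact h3

private lemma rpow_le_of_abs_le {a c e : ℝ} (h : |a| ≤ c) (he : 0 ≤ e) : a ^ e ≤ c ^ e :=
  (le_abs_self _).trans ((Real.abs_rpow_le_abs_rpow a e).trans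
    (Real.rpow_le_rpow (abs_nonneg a) h he))

private lemma rpow_one_div_rpow {s e : ℝ} (hs : 0 ≤ s) (he : e ≠ 0) : (s ^ (1 / e)) ^ e = s := by
  rw [← Real.rpow_mul hs, one_div, inv_mul_cancel₀ he, Real.rpow_one]

private lemma rpow_rpow_one_div {s e : ℝ} (hs : 0 ≤ s) (he : e ≠ 0) : (s ^ e) ^ (1 / e) = s := by
  rw [← Real.rpow_mul hs, one_div, mul_inv_cancel₀ he, Real.rpow_one]

private lemma norm_posPart_le' {H : Type*} [NormedAddCommGroup H] [Lattice H]
    [IsOrderedAddMonoid H] [HasSolidNorm H] (z : H) :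
    ‖z⁺‖ ≤ ‖z‖ := by
  refine norm_le_norm_of_abs_le_abs ?_
  rw [abs_of_nonneg (posPart_nonneg z), posPart_def]
  exact sup_le (le_abs_self z) (abs_nonneg z)

private lemma norm_negPart_le' {H : Type*} [NormedAddCommGroup H] [Lattice H]
    [IsOrderedAddMonoid H] [HasSolidNorm H] (z : H) :
    ‖z⁻‖ ≤ ‖z‖ := by
  refine norm_le_norm_of_abs_le_abs ?_
  rw [abs_of_nonneg (negPart_nonneg z), negPart_def]
  exact sup_le (neg_le_abs z) (abs_nonneg z)

/-- If `T = u ∘ S` with `S` a positive (Dimant) strongly `q`-summing `m`-linear operator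
and `u` a Cohen positive strongly `r`-summing positive linear operator, then `T` is
positive weakly `(q,r)`-dominated. -/
theorem pwd_of_factorization [∀ i, CompleteSpace (E i)] [CompleteSpace G] [CompleteSpace F]
    (p q r : ℝ) (hp : 1 ≤ p) (hq : 1 ≤ q) (hr : 1 ≤ r) (hpqr : 1 / p = 1 / q + 1 / r)
    (T : ContinuousMultilinearMap ℝ E F)
    (S : ContinuousMultilinearMap ℝ E G) (u : G →L[ℝ] F)
    (hu_pos : ∀ z : G, 0 ≤ z → 0 ≤ u z)
    (hcomp : ∀ x : ∀ j, E j, T x = u (S x))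
    (μ : Measure {φ : ContinuousMultilinearMap ℝ E ℝ // ‖φ‖ ≤ 1 ∧ IsPosForm φ})
    (η : Measure {Φ : (F →L[ℝ] ℝ) →L[ℝ] ℝ // ‖Φ‖ ≤ 1 ∧ ∀ g, IsPosFunc g → 0 ≤ Φ g})
    (hμ : IsProbabilityMeasure μ) (hη : IsProbabilityMeasure η)
    (dS : ℝ) (hdS : 0 ≤ dS)
    (hS : ∀ x : ∀ j, E j, (∀ j, 0 ≤ x j) →
      ‖S x‖ ≤ dS * (∫ φ, (φ.1 x) ^ q ∂μ) ^ (1 / q))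
    (du : ℝ) (hdu : 0 ≤ du)
    (hu : ∀ (z : G) (g : F →L[ℝ] ℝ), 0 ≤ z → IsPosFunc g →
      g (u z) ≤ du * ‖z‖ * (∫ Φ, (Φ.1 g) ^ r ∂η) ^ (1 / r)) :
    ∃ C, 0 ≤ C ∧ PWDC p q r T C := by
  classical
  have hp0 : (0:ℝ) < p := lt_of_lt_of_le zero_lt_one hp
  have hq0 : (0:ℝ) < q := lt_of_lt_of_le zero_lt_one hq
  have hr0 : (0:ℝ) < r := lt_of_lt_of_le zero_lt_one hr
  refine ⟨du * dS, mul_nonneg hdu hdS, ?_⟩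
  intro n x y hx hy
  set Ai : Fin n → ℝ := fun i => (∫ φ, (φ.1 (x i)) ^ q ∂μ) ^ (1 / q) with hAidef
  set Bi : Fin n → ℝ := fun i => (∫ Φ, (Φ.1 (y i)) ^ r ∂η) ^ (1 / r) with hBidef
  have hφx : ∀ (φ : {φ : ContinuousMultilinearMap ℝ E ℝ // ‖φ‖ ≤ 1 ∧ IsPosForm φ}) (i : Fin n),
      0 ≤ φ.1 (x i) := fun φ i => φ.2.2 _ (hx i)
  have hΦy : ∀ (Φ : {Φ : (F →L[ℝ] ℝ) →L[ℝ] ℝ // ‖Φ‖ ≤ 1 ∧ ∀ g, IsPosFunc g → 0 ≤ Φ g})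
      (i : Fin n), 0 ≤ Φ.1 (y i) := fun Φ i => Φ.2.2 _ (hy i)
  have hIμ : ∀ i, 0 ≤ ∫ φ, (φ.1 (x i)) ^ q ∂μ :=
    fun i => integral_nonneg fun φ => Real.rpow_nonneg (hφx φ i) q
  have hIη : ∀ i, 0 ≤ ∫ Φ, (Φ.1 (y i)) ^ r ∂η :=
    fun i => integral_nonneg fun Φ => Real.rpow_nonneg (hΦy Φ i) r
  have hAi0 : ∀ i, 0 ≤ Ai i := fun i => Real.rpow_nonneg (hIμ i) _
  have hBi0 : ∀ i, 0 ≤ Bi i := fun i => Real.rpow_nonneg (hIη i) _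
  -- boundedness of the suprema
  have hbddA : BddAbove (Set.range fun φ : {φ : ContinuousMultilinearMap ℝ E ℝ //
      ‖φ‖ ≤ 1 ∧ IsPosForm φ} => (∑ i, (φ.1 (x i)) ^ q) ^ (1 / q)) := by
    refine ⟨(∑ i, (∏ j, ‖x i j‖) ^ q) ^ (1 / q), ?_⟩
    rintro _ ⟨φ, rfl⟩
    refine Real.rpow_le_rpow (Finset.sum_nonneg fun i _ => Real.rpow_nonneg (hφx φ i) q)
      (Finset.sum_le_sum fun i _ => Real.rpow_le_rpow (hφx φ i) ?_ hq0.le) (by positivity)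
    calc φ.1 (x i) ≤ ‖φ.1 (x i)‖ := le_abs_self _
      _ ≤ ‖φ.1‖ * ∏ j, ‖x i j‖ := φ.1.le_opNorm _
      _ ≤ 1 * ∏ j, ‖x i j‖ := by
          exact mul_le_mul_of_nonneg_right φ.2.1 (Finset.prod_nonneg fun j _ => norm_nonneg _)
      _ = ∏ j, ‖x i j‖ := one_mul _
  have hbddB : BddAbove (Set.range fun Φ : {Φ : (F →L[ℝ] ℝ) →L[ℝ] ℝ //
      ‖Φ‖ ≤ 1 ∧ ∀ g, IsPosFunc g → 0 ≤ Φ g} => (∑ i, (Φ.1 (y i)) ^ r) ^ (1 / r)) := by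
    refine ⟨(∑ i, ‖y i‖ ^ r) ^ (1 / r), ?_⟩
    rintro _ ⟨Φ, rfl⟩
    refine Real.rpow_le_rpow (Finset.sum_nonneg fun i _ => Real.rpow_nonneg (hΦy Φ i) r)
      (Finset.sum_le_sum fun i _ => Real.rpow_le_rpow (hΦy Φ i) ?_ hr0.le) (by positivity)
    calc Φ.1 (y i) ≤ ‖Φ.1 (y i)‖ := le_abs_self _
      _ ≤ ‖Φ.1‖ * ‖y i‖ := Φ.1.le_opNorm _
      _ ≤ 1 * ‖y i‖ := mul_le_mul_of_nonneg_right Φ.2.1 (norm_nonneg _)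
      _ = ‖y i‖ := one_mul _
  -- nonnegativity of the suprema
  have hA0 : 0 ≤ posFormBallSup q x := by
    have h0mem : ‖(0 : ContinuousMultilinearMap ℝ E ℝ)‖ ≤ 1 ∧
        IsPosForm (0 : ContinuousMultilinearMap ℝ E ℝ) :=
      ⟨by simp, fun _ _ => le_rfl⟩
    have h := le_ciSup hbddA ⟨0, h0mem⟩
    refine le_trans (le_of_eq ?_) h
    simp only [ContinuousMultilinearMap.zero_apply, Real.zero_rpow hq0.ne',
      Finset.sum_const, smul_zero]
    rw [Real.zero_rpow (one_div_ne_zero hq0.ne')]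
  have hB0 : 0 ≤ posBidualBallSup r y := by
    have h0mem : ‖(0 : (F →L[ℝ] ℝ) →L[ℝ] ℝ)‖ ≤ 1 ∧
        ∀ g, IsPosFunc g → 0 ≤ (0 : (F →L[ℝ] ℝ) →L[ℝ] ℝ) g :=
      ⟨le_trans (le_of_eq ContinuousLinearMap.opNorm_zero) zero_le_one, fun _ _ => le_rfl⟩
    have h := le_ciSup hbddB ⟨0, h0mem⟩
    refine le_trans (le_of_eq ?_) h
    simp only [ContinuousLinearMap.zero_apply, Real.zero_rpow hr0.ne',
      Finset.sum_const, smul_zero]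
    rw [Real.zero_rpow (one_div_ne_zero hr0.ne')]
  -- key integral bounds
  have hsumA : ∑ i, Ai i ^ q ≤ (posFormBallSup q x) ^ q := by
    have hAiq : ∀ i, Ai i ^ q = ∫ φ, (φ.1 (x i)) ^ q ∂μ :=
      fun i => rpow_one_div_rpow (hIμ i) hq0.ne'
    calc ∑ i, Ai i ^ q = ∑ i, ∫ φ, (φ.1 (x i)) ^ q ∂μ := by
          exact Finset.sum_congr rfl fun i _ => hAiq i
      _ ≤ (posFormBallSup q x) ^ q := by
          refine sum_integral_le_of_forall_sum_le μ _ (fun i φ => Real.rpow_nonneg (hφx φ i) q) ?_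
          intro φ
          have hs0 : 0 ≤ ∑ i, (φ.1 (x i)) ^ q :=
            Finset.sum_nonneg fun i _ => Real.rpow_nonneg (hφx φ i) q
          have hle : (∑ i, (φ.1 (x i)) ^ q) ^ (1 / q) ≤ posFormBallSup q x := le_ciSup hbddA φ
          calc ∑ i, (φ.1 (x i)) ^ q = ((∑ i, (φ.1 (x i)) ^ q) ^ (1 / q)) ^ q :=
                (rpow_one_div_rpow hs0 hq0.ne').symm
            _ ≤ (posFormBallSup q x) ^ q :=
                Real.rpow_le_rpow (Real.rpow_nonneg hs0 _) hle hq0.le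
  have hsumB : ∑ i, Bi i ^ r ≤ (posBidualBallSup r y) ^ r := by
    have hBir : ∀ i, Bi i ^ r = ∫ Φ, (Φ.1 (y i)) ^ r ∂η :=
      fun i => rpow_one_div_rpow (hIη i) hr0.ne'
    calc ∑ i, Bi i ^ r = ∑ i, ∫ Φ, (Φ.1 (y i)) ^ r ∂η := by
          exact Finset.sum_congr rfl fun i _ => hBir i
      _ ≤ (posBidualBallSup r y) ^ r := by
          refine @sum_integral_le_of_forall_sum_le _ Subtype.instMeasurableSpace η hη _ _ (fun i Φ => Real.rpow_nonneg (hΦy Φ i) r) _ ?_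
          intro Φ
          have hs0 : 0 ≤ ∑ i, (Φ.1 (y i)) ^ r :=
            Finset.sum_nonneg fun i _ => Real.rpow_nonneg (hΦy Φ i) r
          have hle : (∑ i, (Φ.1 (y i)) ^ r) ^ (1 / r) ≤ posBidualBallSup r y := le_ciSup hbddB Φ
          calc ∑ i, (Φ.1 (y i)) ^ r = ((∑ i, (Φ.1 (y i)) ^ r) ^ (1 / r)) ^ r :=
                (rpow_one_div_rpow hs0 hr0.ne').symm
            _ ≤ (posBidualBallSup r y) ^ r :=
                Real.rpow_le_rpow (Real.rpow_nonneg hs0 _) hle hr0.le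
  -- pointwise bound |⟨y i, T (x i)⟩| ≤ du * dS * (Ai i * Bi i)
  have habs : ∀ i, |(y i) (T (x i))| ≤ du * dS * (Ai i * Bi i) := by
    intro i
    set z : G := S (x i) with hz
    have hznorm : ‖z‖ ≤ dS * Ai i := hS (x i) (hx i)
    have hupper : ∀ w : G, 0 ≤ w → (y i) (u w) ≤ du * ‖z‖ * Bi i → True := fun _ _ _ => trivial
    have hBnd : ∀ w : G, 0 ≤ w → ‖w‖ ≤ ‖z‖ → (y i) (u w) ≤ du * ‖z‖ * Bi i := by
      intro w hw hwz
      refine le_trans (hu w (y i) hw (hy i)) ?_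
      exact mul_le_mul_of_nonneg_right
        (mul_le_mul_of_nonneg_left hwz hdu) (hBi0 i)
    have hdecomp : (y i) (u z) = (y i) (u z⁺) - (y i) (u z⁻) := by
      conv_lhs => rw [← posPart_sub_negPart z]
      rw [map_sub, map_sub]
    have hposp : (0:ℝ) ≤ (y i) (u z⁺) := (hy i) _ (hu_pos _ (posPart_nonneg z))
    have hposn : (0:ℝ) ≤ (y i) (u z⁻) := (hy i) _ (hu_pos _ (negPart_nonneg z))
    have hub : (y i) (u z) ≤ du * ‖z‖ * Bi i := by
      rw [hdecomp]
      have := hBnd z⁺ (posPart_nonneg z) (norm_posPart_le' z)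
      linarith
    have hlb : -(du * ‖z‖ * Bi i) ≤ (y i) (u z) := by
      rw [hdecomp]
      have := hBnd z⁻ (negPart_nonneg z) (norm_negPart_le' z)
      linarith
    have habs1 : |(y i) (u z)| ≤ du * ‖z‖ * Bi i := abs_le.mpr ⟨hlb, hub⟩
    have : du * ‖z‖ * Bi i ≤ du * dS * (Ai i * Bi i) := by
      have h1 : du * ‖z‖ ≤ du * (dS * Ai i) := mul_le_mul_of_nonneg_left hznorm hdu
      calc du * ‖z‖ * Bi i ≤ du * (dS * Ai i) * Bi i :=
            mul_le_mul_of_nonneg_right h1 (hBi0 i)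
        _ = du * dS * (Ai i * Bi i) := by ring
    rw [hcomp (x i)]
    exact habs1.trans this
  -- conjugate exponents q/p, r/p
  have hpq_lt : p < q := by
    have h1 : 1 / q < 1 / p := by
      rw [hpqr]
      have : 0 < 1 / r := by positivity
      linarith
    exact by
      by_contra hcon
      push_neg at hcon
      have : 1 / p ≤ 1 / q := one_div_le_one_div_of_le hq0 hcon
      linarith
  have hconj : Real.HolderConjugate (q / p) (r / p) := by
    constructor
    · rw [inv_div, inv_div, inv_one]
      have hq' : q ≠ 0 := hq0.ne'
      have hr' : r ≠ 0 := hr0.ne'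
      have hp' : p ≠ 0 := hp0.ne'
      field_simp at hpqr ⊢
      nlinarith [hpqr]
    · positivity
    · positivity
  -- Hölder
  have hholder : ∑ i, (Ai i * Bi i) ^ p ≤
      (posFormBallSup q x) ^ p * (posBidualBallSup r y) ^ p := by
    have h1 : ∑ i, (Ai i ^ p) * (Bi i ^ p) ≤
        (∑ i, (Ai i ^ p) ^ (q / p)) ^ (1 / (q / p)) *
        (∑ i, (Bi i ^ p) ^ (r / p)) ^ (1 / (r / p)) :=
      Real.inner_le_Lp_mul_Lq_of_nonneg (s := Finset.univ) hconj
        (fun i _ => Real.rpow_nonneg (hAi0 i) p) (fun i _ => Real.rpow_nonneg (hBi0 i) p)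
    have hApq : ∀ i, (Ai i ^ p) ^ (q / p) = Ai i ^ q := fun i => by
      rw [← Real.rpow_mul (hAi0 i)]
      congr 1
      field_simp
    have hBpr : ∀ i, (Bi i ^ p) ^ (r / p) = Bi i ^ r := fun i => by
      rw [← Real.rpow_mul (hBi0 i)]
      congr 1
      field_simp
    have h2 : ∑ i, (Ai i * Bi i) ^ p = ∑ i, (Ai i ^ p) * (Bi i ^ p) :=
      Finset.sum_congr rfl fun i _ => Real.mul_rpow (hAi0 i) (hBi0 i)
    have hsumA' : (∑ i, (Ai i ^ p) ^ (q / p)) ^ (1 / (q / p)) ≤ (posFormBallSup q x) ^ p := by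
      have hrw : ∑ i, (Ai i ^ p) ^ (q / p) = ∑ i, Ai i ^ q :=
        Finset.sum_congr rfl fun i _ => hApq i
      rw [hrw]
      have hs0 : 0 ≤ ∑ i, Ai i ^ q :=
        Finset.sum_nonneg fun i _ => Real.rpow_nonneg (hAi0 i) q
      calc (∑ i, Ai i ^ q) ^ (1 / (q / p)) ≤ ((posFormBallSup q x) ^ q) ^ (1 / (q / p)) :=
            Real.rpow_le_rpow hs0 hsumA (by positivity)
        _ = (posFormBallSup q x) ^ p := by
            rw [← Real.rpow_mul hA0]
            congr 1
            field_simp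
    have hsumB' : (∑ i, (Bi i ^ p) ^ (r / p)) ^ (1 / (r / p)) ≤ (posBidualBallSup r y) ^ p := by
      have hrw : ∑ i, (Bi i ^ p) ^ (r / p) = ∑ i, Bi i ^ r :=
        Finset.sum_congr rfl fun i _ => hBpr i
      rw [hrw]
      have hs0 : 0 ≤ ∑ i, Bi i ^ r :=
        Finset.sum_nonneg fun i _ => Real.rpow_nonneg (hBi0 i) r
      calc (∑ i, Bi i ^ r) ^ (1 / (r / p)) ≤ ((posBidualBallSup r y) ^ r) ^ (1 / (r / p)) :=
            Real.rpow_le_rpow hs0 hsumB (by positivity)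
        _ = (posBidualBallSup r y) ^ p := by
            rw [← Real.rpow_mul hB0]
            congr 1
            field_simp
    calc ∑ i, (Ai i * Bi i) ^ p = ∑ i, (Ai i ^ p) * (Bi i ^ p) := h2
      _ ≤ (∑ i, (Ai i ^ p) ^ (q / p)) ^ (1 / (q / p)) *
          (∑ i, (Bi i ^ p) ^ (r / p)) ^ (1 / (r / p)) := h1
      _ ≤ (posFormBallSup q x) ^ p * (posBidualBallSup r y) ^ p := by
          refine mul_le_mul hsumA' hsumB' (Real.rpow_nonneg ?_ _) (Real.rpow_nonneg hA0 _)
          exact Finset.sum_nonneg fun i _ => Real.rpow_nonneg (Real.rpow_nonneg (hBi0 i) p) _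
  -- assemble
  set t := ∑ i, ((y i) (T (x i))) ^ p with ht
  set s := ∑ i, (du * dS * (Ai i * Bi i)) ^ p with hsdef
  have hs0 : 0 ≤ s :=
    Finset.sum_nonneg fun i _ => Real.rpow_nonneg
      (mul_nonneg (mul_nonneg hdu hdS) (mul_nonneg (hAi0 i) (hBi0 i))) p
  have hts : |t| ≤ s := by
    refine (Finset.abs_sum_le_sum_abs _ _).trans (Finset.sum_le_sum fun i _ => ?_)
    exact (Real.abs_rpow_le_abs_rpow _ _).trans
      (Real.rpow_le_rpow (abs_nonneg _) (habs i) hp0.le)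
  have h1 : t ^ (1 / p) ≤ s ^ (1 / p) :=
    (le_abs_self _).trans ((Real.abs_rpow_le_abs_rpow t (1 / p)).trans
      (Real.rpow_le_rpow (abs_nonneg t) hts (by positivity)))
  have hsig : 0 ≤ ∑ i, (Ai i * Bi i) ^ p :=
    Finset.sum_nonneg fun i _ => Real.rpow_nonneg (mul_nonneg (hAi0 i) (hBi0 i)) p
  have h2 : s ^ (1 / p) ≤ du * dS * (posFormBallSup q x * posBidualBallSup r y) := by
    have hseq : s = (du * dS) ^ p * ∑ i, (Ai i * Bi i) ^ p := by
      rw [hsdef, Finset.mul_sum]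
      exact Finset.sum_congr rfl fun i _ =>
        Real.mul_rpow (mul_nonneg hdu hdS) (mul_nonneg (hAi0 i) (hBi0 i))
    calc s ^ (1 / p) = ((du * dS) ^ p) ^ (1 / p) * (∑ i, (Ai i * Bi i) ^ p) ^ (1 / p) := by
          rw [hseq, Real.mul_rpow (Real.rpow_nonneg (mul_nonneg hdu hdS) p) hsig]
      _ = (du * dS) * (∑ i, (Ai i * Bi i) ^ p) ^ (1 / p) := by
          rw [rpow_rpow_one_div (mul_nonneg hdu hdS) hp0.ne']
      _ ≤ (du * dS) * ((posFormBallSup q x) ^ p * (posBidualBallSup r y) ^ p) ^ (1 / p) := by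
          refine mul_le_mul_of_nonneg_left
            (Real.rpow_le_rpow hsig hholder (by positivity)) (mul_nonneg hdu hdS)
      _ = du * dS * (posFormBallSup q x * posBidualBallSup r y) := by
          rw [Real.mul_rpow (Real.rpow_nonneg hA0 p) (Real.rpow_nonneg hB0 p),
            rpow_rpow_one_div hA0 hp0.ne', rpow_rpow_one_div hB0 hp0.ne']
  calc t ^ (1 / p) ≤ s ^ (1 / p) := h1
    _ ≤ du * dS * (posFormBallSup q x * posBidualBallSup r y) := h2
    _ = du * dS * posFormBallSup q x * posBidualBallSup r y := by ring

end
end
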